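/- arXiv:2511.17281 — 2 statements merged into one kernel-verified Lean document; each statement's English description precedes it below -/
import Mathlib

section
/- Let {U_k} be i.i.d. non-negative random variables with P(U_1=0)<1 and E[U_1^p]<∞ for some p>2, and L the associated renewal process. Then sup_{0≤t≤1} (1/√n)·(nt − S_{L(nt)}) → 0 in probability as n→∞. -/
open MeasureTheory ProbabilityTheory Filter Set Topology
open scoped ENNReal

/-- Sup-distance (uniform distance) of two paths over `[0,1]`, valued in `ℝ≥0∞`. -/
noncomputable def supDistE (x y : ℝ → ℝ) : ℝ≥0∞ :=
  ⨆ t : Set.Icc (0:ℝ) 1, ENNReal.ofReal |x t - y t|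

/-- Skorokhod J₁ distance of two paths over `[0,1]`. -/
noncomputable def skorokhodDist (x y : ℝ → ℝ) : ℝ :=
  sInf { d : ℝ | 0 ≤ d ∧ ∃ l : ℝ → ℝ, StrictMonoOn l (Set.Icc 0 1) ∧
    ContinuousOn l (Set.Icc 0 1) ∧ l 0 = 0 ∧ l 1 = 1 ∧
    ∀ t ∈ Set.Icc (0:ℝ) 1, |l t - t| ≤ d ∧ |x (l t) - y t| ≤ d }

/-- A path is càdlàg on `[0,1]`. -/
def Cadlag (x : ℝ → ℝ) : Prop :=
  (∀ t ∈ Set.Ico (0:ℝ) 1, ContinuousWithinAt x (Set.Icc t 1) t) ∧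
  (∀ t ∈ Set.Ioc (0:ℝ) 1, ∃ L : ℝ, Filter.Tendsto x (nhdsWithin t (Set.Iio t)) (nhds L))

/-- Bounded test function, continuous w.r.t. the uniform distance on `[0,1]`. -/
def UnifTestFun (F : (ℝ → ℝ) → ℝ) : Prop :=
  Measurable F ∧ (∃ M : ℝ, ∀ x, |F x| ≤ M) ∧
  ∀ x : ℝ → ℝ, ∀ ε > (0:ℝ), ∃ δ > (0:ℝ), ∀ y : ℝ → ℝ,
    supDistE x y < ENNReal.ofReal δ → |F x - F y| < ε

/-- Bounded test function, continuous w.r.t. the Skorokhod distance on `[0,1]`. -/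
def SkorokhodTestFun (F : (ℝ → ℝ) → ℝ) : Prop :=
  Measurable F ∧ (∃ M : ℝ, ∀ x, |F x| ≤ M) ∧
  ∀ x : ℝ → ℝ, ∀ ε > (0:ℝ), ∃ δ > (0:ℝ), ∀ y : ℝ → ℝ,
    skorokhodDist x y < δ → |F x - F y| < ε

/-- `μ` is the law (on path space) of a Brownian motion on `[0,1]` with variance parameter `v`. -/
noncomputable def IsBMLaw (v : ℝ) (μ : Measure (ℝ → ℝ)) : Prop :=
  IsProbabilityMeasure μ ∧
  (∀ᵐ f ∂μ, f 0 = 0 ∧ ContinuousOn f (Set.Icc 0 1)) ∧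
  (∀ s t : ℝ, 0 ≤ s → s ≤ t → t ≤ 1 →
    μ.map (fun f => f t - f s) = gaussianReal 0 (Real.toNNReal (v * (t - s)))) ∧
  (∀ (k : ℕ) (ts : Fin (k+1) → ℝ), Monotone ts → (∀ i, ts i ∈ Set.Icc (0:ℝ) 1) →
    iIndepFun
      (fun (i : Fin k) (f : ℝ → ℝ) => f (ts i.succ) - f (ts i.castSucc)) μ)

/-- Partial sums `S_n = U_1 + ⋯ + U_n` (here `U k` denotes the inter-arrival time `U_{k+1}`). -/
def renewalS {Ω : Type*} (U : ℕ → Ω → ℝ) (ω : Ω) (n : ℕ) : ℝ :=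
  ∑ k ∈ Finset.range n, U k ω

/-- The renewal counting process `L(t) = #{n ≥ 1 : S_n ≤ t}` (as the largest such `n`). -/
noncomputable def renewalL {Ω : Type*} (U : ℕ → Ω → ℝ) (ω : Ω) (t : ℝ) : ℕ :=
  sSup {n : ℕ | renewalS U ω n ≤ t}

lemma renewalS_mono {Ω : Type*} {U : ℕ → Ω → ℝ} (hnonneg : ∀ k ω, 0 ≤ U k ω) (ω : Ω) :
    Monotone (renewalS U ω) := by
  intro a b hab
  exact Finset.sum_le_sum_of_subset_of_nonneg (Finset.range_subset_range.2 hab)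
    (fun k _ _ => hnonneg k ω)

lemma age_bounds {Ω : Type*} {U : ℕ → Ω → ℝ} (hnonneg : ∀ k ω, 0 ≤ U k ω)
    (ω : Ω) {M : ℕ} {s b c : ℝ} (hs0 : 0 ≤ s) (hsb : s ≤ b) (hM : b < renewalS U ω M)
    (hgap : ∀ k < M, U k ω < c) :
    0 ≤ s - renewalS U ω (renewalL U ω s) ∧ s - renewalS U ω (renewalL U ω s) < c := by
  set T : Set ℕ := {m : ℕ | renewalS U ω m ≤ s} with hT
  have h0 : 0 ∈ T := by simp [hT, renewalS, hs0]
  have hbdd : ∀ m ∈ T, m < M := by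
    intro m hm
    by_contra hc
    push_neg at hc
    have : renewalS U ω m ≤ s := hm
    linarith [renewalS_mono hnonneg ω hc]
  have hBdd : BddAbove T := ⟨M, fun m hm => (hbdd m hm).le⟩
  have hLmem : renewalL U ω s ∈ T := Nat.sSup_mem ⟨0, h0⟩ hBdd
  have hL1 : renewalL U ω s + 1 ∉ T := by
    intro hmem
    have := le_csSup hBdd hmem
    change renewalL U ω s + 1 ≤ renewalL U ω s at this; omega
  have hlt : s < renewalS U ω (renewalL U ω s + 1) := lt_of_not_ge hL1
  have hsum : renewalS U ω (renewalL U ω s + 1)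
      = renewalS U ω (renewalL U ω s) + U (renewalL U ω s) ω :=
    Finset.sum_range_succ _ _
  have hLM : renewalL U ω s < M := hbdd _ hLmem
  have hUc : U (renewalL U ω s) ω < c := hgap _ hLM
  have hSle : renewalS U ω (renewalL U ω s) ≤ s := hLmem
  exact ⟨by linarith, by linarith⟩

/-- the normalized age process satisfies
`sup_{0≤t≤1} (1/√n)·(nt − S_{L(nt)}) → 0` in probability. -/
theorem stmt13 {Ω : Type*} [MeasurableSpace Ω] (P : Measure Ω) [IsProbabilityMeasure P]
    (U : ℕ → Ω → ℝ) (hmeas : ∀ k, Measurable (U k))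
    (hindep : iIndepFun U P)
    (hident : ∀ k, IdentDistrib (U k) (U 0) P P)
    (hnonneg : ∀ k ω, 0 ≤ U k ω)
    (hzero : P {ω | U 0 ω = 0} < 1)
    (p : ℝ) (hp : 2 < p)
    (hmom : Integrable (fun ω => U 0 ω ^ p) P) :
    ∀ ε > (0:ℝ),
      Tendsto
        (fun n : ℕ => P {ω | ENNReal.ofReal ε ≤
          ⨆ t : Set.Icc (0:ℝ) 1, ENNReal.ofReal ((Real.sqrt n)⁻¹ *
            ((n:ℝ) * t - renewalS U ω (renewalL U ω ((n:ℝ) * t))))})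
        atTop (𝓝 0) := by
  intro ε hε
  have hU0 := hmeas 0
  have hp0 : (0:ℝ) < p := by linarith
  have hp1 : (1:ℝ) ≤ p := by linarith
  -- pointwise domination
  have hrpnn : ∀ ω, (0:ℝ) ≤ U 0 ω ^ p := fun ω => Real.rpow_nonneg (hnonneg 0 ω) p
  have hb1 : ∀ ω, U 0 ω ≤ 1 + U 0 ω ^ p := by
    intro ω
    rcases le_or_gt (U 0 ω) 1 with h | h
    · linarith [hrpnn ω]
    · have h1 : U 0 ω ^ (1:ℝ) ≤ U 0 ω ^ p := Real.rpow_le_rpow_of_exponent_le h.le hp1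
      rw [Real.rpow_one] at h1
      linarith
  have hb2 : ∀ ω, U 0 ω ^ (2:ℕ) ≤ 1 + U 0 ω ^ p := by
    intro ω
    rcases le_or_gt (U 0 ω) 1 with h | h
    · have h0 := hnonneg 0 ω
      have : U 0 ω ^ (2:ℕ) ≤ 1 := by nlinarith
      linarith [hrpnn ω]
    · have h1 : U 0 ω ^ ((2:ℕ):ℝ) ≤ U 0 ω ^ p :=
        Real.rpow_le_rpow_of_exponent_le h.le (by exact_mod_cast hp.le)
      rw [Real.rpow_natCast] at h1
      linarith
  have hdom : Integrable (fun ω => 1 + U 0 ω ^ p) P := (integrable_const (1:ℝ)).add hmom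
  have hint1 : Integrable (U 0) P := by
    refine hdom.mono' hU0.aestronglyMeasurable (ae_of_all _ fun ω => ?_)
    rw [Real.norm_of_nonneg (hnonneg 0 ω)]
    exact hb1 ω
  have hint2 : Integrable (fun ω => U 0 ω ^ (2:ℕ)) P := by
    refine hdom.mono' (hU0.pow_const 2).aestronglyMeasurable (ae_of_all _ fun ω => ?_)
    rw [Real.norm_of_nonneg (pow_nonneg (hnonneg 0 ω) 2)]
    exact hb2 ω
  have hL2 : MemLp (U 0) 2 P :=
    (memLp_two_iff_integrable_sq hU0.aestronglyMeasurable).2 hint2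
  -- mean and variance
  set m : ℝ := ∫ ω, U 0 ω ∂P with hm_def
  have hm_pos : 0 < m := by
    rcases (integral_nonneg (fun ω => hnonneg 0 ω) : (0:ℝ) ≤ m).lt_or_eq with h | h
    · exact h
    · exfalso
      have h0 : ∫ ω, U 0 ω ∂P = 0 := h.symm
      have hae : ∀ᵐ ω ∂P, U 0 ω = 0 :=
        (integral_eq_zero_iff_of_nonneg (fun ω => hnonneg 0 ω) hint1).1 h0
      have hcompl : P {ω | U 0 ω = 0}ᶜ = 0 := by
        rw [Set.compl_setOf]; simpa [ae_iff] using hae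
      have hone : (1:ℝ≥0∞) ≤ P {ω | U 0 ω = 0} := by
        calc (1:ℝ≥0∞) = P univ := measure_univ.symm
        _ = P ({ω | U 0 ω = 0} ∪ {ω | U 0 ω = 0}ᶜ) := by rw [union_compl_self]
        _ ≤ P {ω | U 0 ω = 0} + P {ω | U 0 ω = 0}ᶜ := measure_union_le _ _
        _ = P {ω | U 0 ω = 0} := by rw [hcompl, add_zero]
      exact absurd hzero (not_lt.2 hone)
  set v : ℝ := variance (U 0) P with hv_def
  have hv0 : 0 ≤ v := variance_nonneg _ _
  set I : ℝ := ∫ ω, U 0 ω ^ p ∂P with hI_def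
  have hI0 : 0 ≤ I := integral_nonneg hrpnn
  set C : ℕ := ⌈2 / m⌉₊ with hC_def
  have hC2 : 2 ≤ (C:ℝ) * m := by
    have := Nat.le_ceil (2 / m)
    calc (2:ℝ) = 2 / m * m := by field_simp
    _ ≤ (C:ℝ) * m := by
      apply mul_le_mul_of_nonneg_right _ hm_pos.le
      exact_mod_cast this
  -- L² and moments of U k and S N
  have hkL2 : ∀ k, MemLp (U k) 2 P := fun k => (hident k).memLp_iff.2 hL2
  have hSL2 : ∀ N, MemLp (fun ω => renewalS U ω N) 2 P := by
    intro N
    have := memLp_finset_sum (Finset.range N) (fun k _ => hkL2 k)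
    simpa [renewalS] using this
  have hES : ∀ N : ℕ, ∫ ω, renewalS U ω N ∂P = N * m := by
    intro N
    simp only [renewalS]
    rw [integral_finset_sum _ (fun k _ => (hkL2 k).integrable one_le_two)]
    have : ∀ k, ∫ ω, U k ω ∂P = m := fun k => (hident k).integral_eq
    simp [this, Finset.sum_const, nsmul_eq_mul]
  have hVarS : ∀ N : ℕ, variance (fun ω => renewalS U ω N) P = N * v := by
    intro N
    have heq : (fun ω => renewalS U ω N) = ∑ k ∈ Finset.range N, U k := by
      ext ω; simp [renewalS]
    rw [heq, IndepFun.variance_sum (fun k _ => hkL2 k)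
      (fun i _ j _ hij => hindep.indepFun hij)]
    have : ∀ k, variance (U k) P = v := fun k => (hident k).variance_eq
    simp [this, Finset.sum_const, nsmul_eq_mul]
  -- the two bad events
  set A : ℕ → Set Ω := fun n => {ω | renewalS U ω (C * n) ≤ n} with hA_def
  set B : ℕ → Set Ω := fun n => {ω | ∃ k < C * n, ε / 2 * Real.sqrt n ≤ U k ω} with hB_def
  have hPA : ∀ n : ℕ, 1 ≤ n → P (A n) ≤ ENNReal.ofReal ((C:ℝ) * v / n) := by
    intro n hn
    have hnpos : (0:ℝ) < n := by exact_mod_cast hn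
    have hsub : A n ⊆
        {ω | (n:ℝ) ≤ |renewalS U ω (C * n) - ∫ ω', renewalS U ω' (C * n) ∂P|} := by
      intro ω hω
      simp only [hA_def, mem_setOf_eq] at hω ⊢
      rw [hES (C * n)]
      have h2 : 2 * (n:ℝ) ≤ ((C * n : ℕ) : ℝ) * m := by
        push_cast
        nlinarith
      calc (n:ℝ) ≤ ((C * n : ℕ) : ℝ) * m - renewalS U ω (C * n) := by linarith
      _ ≤ |((C * n : ℕ) : ℝ) * m - renewalS U ω (C * n)| := le_abs_self _
      _ = |renewalS U ω (C * n) - ((C * n : ℕ) : ℝ) * m| := abs_sub_comm _ _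
    calc P (A n) ≤ P {ω | (n:ℝ) ≤ |renewalS U ω (C * n) - ∫ ω', renewalS U ω' (C * n) ∂P|} :=
      measure_mono hsub
    _ ≤ ENNReal.ofReal (variance (fun ω => renewalS U ω (C * n)) P / (n:ℝ) ^ 2) :=
      meas_ge_le_variance_div_sq (hSL2 (C * n)) hnpos
    _ = ENNReal.ofReal ((C:ℝ) * v / n) := by
      rw [hVarS (C * n)]
      congr 1
      push_cast
      field_simp
  have hPB : ∀ n : ℕ, 1 ≤ n →
      P (B n) ≤ ENNReal.ofReal (((C * n : ℕ) : ℝ) * (I / (ε / 2 * Real.sqrt n) ^ p)) := by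
    intro n hn
    have hnpos : (0:ℝ) < n := by exact_mod_cast hn
    have hsq : 0 < Real.sqrt n := Real.sqrt_pos.2 hnpos
    set a : ℝ := ε / 2 * Real.sqrt n with ha_def
    have ha : 0 < a := by positivity
    have hap : 0 < a ^ p := Real.rpow_pos_of_pos ha p
    -- Markov bound for a single variable
    have hmarkov : P {ω | a ≤ U 0 ω} ≤ ENNReal.ofReal (I / a ^ p) := by
      have hsub : {ω | a ≤ U 0 ω} ⊆ {ω | a ^ p ≤ U 0 ω ^ p} := by
        intro ω hω
        exact Real.rpow_le_rpow ha.le hω hp0.le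
      have hmk := mul_meas_ge_le_integral_of_nonneg (ae_of_all _ hrpnn) hmom (a ^ p)
      have htr : (P {ω | a ^ p ≤ U 0 ω ^ p}).toReal ≤ I / a ^ p := by
        rw [le_div_iff₀ hap, mul_comm]
        exact hmk
      calc P {ω | a ≤ U 0 ω} ≤ P {ω | a ^ p ≤ U 0 ω ^ p} := measure_mono hsub
      _ ≤ ENNReal.ofReal (I / a ^ p) :=
        (ENNReal.le_ofReal_iff_toReal_le (measure_ne_top _ _) (by positivity)).2 htr
    have hident' : ∀ k, P {ω | a ≤ U k ω} = P {ω | a ≤ U 0 ω} := by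
      intro k
      have := (hident k).measure_mem_eq (measurableSet_Ici (a := a))
      simpa [preimage, Set.mem_Ici] using this
    have hsubB : B n ⊆ ⋃ k ∈ Finset.range (C * n), {ω | a ≤ U k ω} := by
      rintro ω ⟨k, hk, hka⟩
      exact Set.mem_biUnion (Finset.mem_range.2 hk) hka
    calc P (B n) ≤ P (⋃ k ∈ Finset.range (C * n), {ω | a ≤ U k ω}) := measure_mono hsubB
    _ ≤ ∑ k ∈ Finset.range (C * n), P {ω | a ≤ U k ω} := measure_biUnion_finset_le _ _
    _ = (C * n : ℕ) * P {ω | a ≤ U 0 ω} := by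
      simp [hident', Finset.sum_const, nsmul_eq_mul]
    _ ≤ (C * n : ℕ) * ENNReal.ofReal (I / a ^ p) := by
      exact mul_le_mul_right hmarkov _
    _ = ENNReal.ofReal (((C * n : ℕ) : ℝ) * (I / a ^ p)) := by
      rw [ENNReal.ofReal_mul (by positivity), ENNReal.ofReal_natCast]
  
  -- main inclusion: bad event ⊆ A ∪ B
  have hincl : ∀ n : ℕ, 1 ≤ n →
      {ω | ENNReal.ofReal ε ≤ ⨆ t : Set.Icc (0:ℝ) 1, ENNReal.ofReal ((Real.sqrt n)⁻¹ *
          ((n:ℝ) * t - renewalS U ω (renewalL U ω ((n:ℝ) * t))))} ⊆ A n ∪ B n := by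
    intro n hn ω hω
    by_contra hc
    simp only [Set.mem_union, not_or] at hc
    obtain ⟨hA', hB'⟩ := hc
    simp only [hA_def, mem_setOf_eq, not_le] at hA'
    simp only [hB_def, mem_setOf_eq] at hB'
    push_neg at hB'
    have hnpos : (0:ℝ) < n := by exact_mod_cast hn
    have hsq : 0 < Real.sqrt n := Real.sqrt_pos.2 hnpos
    have hsup : (⨆ t : Set.Icc (0:ℝ) 1, ENNReal.ofReal ((Real.sqrt n)⁻¹ *
        ((n:ℝ) * t - renewalS U ω (renewalL U ω ((n:ℝ) * t)))))
        ≤ ENNReal.ofReal (ε / 2) := by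
      apply iSup_le
      intro t
      obtain ⟨ht0, ht1⟩ := t.2
      have hs0 : (0:ℝ) ≤ (n:ℝ) * t := mul_nonneg hnpos.le ht0
      have hsb : (n:ℝ) * t ≤ n := by nlinarith
      obtain ⟨hage0, hagec⟩ := age_bounds hnonneg ω hs0 hsb hA' hB'
      have h1 : (Real.sqrt n)⁻¹ * ((n:ℝ) * t - renewalS U ω (renewalL U ω ((n:ℝ) * t)))
          ≤ (Real.sqrt n)⁻¹ * (ε / 2 * Real.sqrt n) :=
        mul_le_mul_of_nonneg_left hagec.le (inv_nonneg.2 hsq.le)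
      have h2 : (Real.sqrt n)⁻¹ * (ε / 2 * Real.sqrt n) = ε / 2 := by
        field_simp
      exact ENNReal.ofReal_le_ofReal (by linarith)
    have hle : ENNReal.ofReal ε ≤ ENNReal.ofReal (ε / 2) := le_trans hω hsup
    have := (ENNReal.ofReal_le_ofReal_iff (by positivity)).1 hle
    linarith
  -- limits of the bounds
  have t1 : Tendsto (fun n : ℕ => ENNReal.ofReal ((C:ℝ) * v / n)) atTop (𝓝 0) := by
    rw [← ENNReal.ofReal_zero]
    apply ENNReal.tendsto_ofReal
    have := tendsto_one_div_atTop_nhds_zero_nat.const_mul ((C:ℝ) * v)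
    simpa [mul_one_div, div_eq_mul_inv] using this
  have t2 : Tendsto (fun n : ℕ =>
      ENNReal.ofReal (((C * n : ℕ) : ℝ) * (I / (ε / 2 * Real.sqrt n) ^ p)))
      atTop (𝓝 0) := by
    rw [← ENNReal.ofReal_zero]
    apply ENNReal.tendsto_ofReal
    have hmain : Tendsto (fun n : ℕ => ((C:ℝ) * I / (ε / 2) ^ p) * (n:ℝ) ^ (1 - p / 2))
        atTop (𝓝 0) := by
      have h1 : Tendsto (fun x : ℝ => x ^ (-(p / 2 - 1))) atTop (𝓝 0) :=
        tendsto_rpow_neg_atTop (by linarith)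
      have h2 := (h1.comp tendsto_natCast_atTop_atTop).const_mul ((C:ℝ) * I / (ε / 2) ^ p)
      simpa [Function.comp, neg_sub, mul_zero] using h2
    apply hmain.congr'
    filter_upwards [eventually_ge_atTop 1] with n hn
    have hnpos : (0:ℝ) < n := by exact_mod_cast hn
    have hsplit : (ε / 2 * Real.sqrt n) ^ p = (ε / 2) ^ p * (n:ℝ) ^ (p / 2) := by
      rw [Real.mul_rpow (by positivity) (Real.sqrt_nonneg _)]
      congr 1
      rw [Real.sqrt_eq_rpow, ← Real.rpow_mul hnpos.le]
      congr 1
      ring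
    have hdiv : (n:ℝ) / (n:ℝ) ^ (p / 2) = (n:ℝ) ^ (1 - p / 2) := by
      rw [Real.rpow_sub hnpos, Real.rpow_one]
    have hεp : (0:ℝ) < (ε / 2) ^ p := Real.rpow_pos_of_pos (by positivity) p
    have hnp : (0:ℝ) < (n:ℝ) ^ (p / 2) := Real.rpow_pos_of_pos hnpos _
    rw [← hdiv, hsplit]
    push_cast
    field_simp
  have hlim : Tendsto (fun n : ℕ => ENNReal.ofReal ((C:ℝ) * v / n) +
      ENNReal.ofReal (((C * n : ℕ) : ℝ) * (I / (ε / 2 * Real.sqrt n) ^ p)))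
      atTop (𝓝 0) := by
    simpa using t1.add t2
  refine tendsto_of_tendsto_of_tendsto_of_le_of_le' tendsto_const_nhds hlim
    (Filter.Eventually.of_forall fun n => zero_le) ?_
  filter_upwards [eventually_ge_atTop 1] with n hn
  exact le_trans (measure_mono (hincl n hn))
    (le_trans (measure_union_le _ _) (add_le_add (hPA n hn) (hPB n hn)))
end

section
/- Let x_n → x in D[0,1] (Skorokhod topology) where x is continuous, and let φ_n → φ in D_0 (the space of non-decreasing càdlàg functions from [0,1] into [0,1]) where φ is continuous. Then x_n ∘ φ_n → x ∘ φ in D[0,1]. -/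
open MeasureTheory ProbabilityTheory Filter Set Topology
open scoped ENNReal

/-- The defining set for `skorokhodDist`. -/
def skorSet (x y : ℝ → ℝ) : Set ℝ :=
  { d : ℝ | 0 ≤ d ∧ ∃ l : ℝ → ℝ, StrictMonoOn l (Set.Icc 0 1) ∧
    ContinuousOn l (Set.Icc 0 1) ∧ l 0 = 0 ∧ l 1 = 1 ∧
    ∀ t ∈ Set.Icc (0:ℝ) 1, |l t - t| ≤ d ∧ |x (l t) - y t| ≤ d }

lemma skorokhodDist_eq (x y : ℝ → ℝ) : skorokhodDist x y = sInf (skorSet x y) := rfl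

lemma skorSet_bddBelow (x y : ℝ → ℝ) : BddBelow (skorSet x y) :=
  ⟨0, fun _ hd => hd.1⟩

lemma skorokhodDist_nonneg (x y : ℝ → ℝ) : 0 ≤ skorokhodDist x y :=
  Real.sInf_nonneg (fun _ hd => hd.1)

lemma skorSet_nonempty {x y : ℝ → ℝ} {Mx My : ℝ}
    (hx : ∀ t ∈ Set.Icc (0:ℝ) 1, |x t| ≤ Mx) (hy : ∀ t ∈ Set.Icc (0:ℝ) 1, |y t| ≤ My) :
    (skorSet x y).Nonempty := by
  have h0 : (0:ℝ) ≤ |x 0| + |y 0| := by positivity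
  have hM : 0 ≤ Mx + My := by
    have h1 := hx 0 ⟨le_refl 0, zero_le_one⟩
    have h2 := hy 0 ⟨le_refl 0, zero_le_one⟩
    linarith [abs_nonneg (x 0), abs_nonneg (y 0)]
  refine ⟨Mx + My, hM, id, strictMono_id.strictMonoOn _, continuousOn_id, rfl, rfl, ?_⟩
  intro t ht
  refine ⟨by simp [hM], ?_⟩
  calc |x (id t) - y t| ≤ |x t| + |y t| := abs_sub _ _
    _ ≤ Mx + My := add_le_add (hx t ht) (hy t ht)

lemma cadlag_bdd {x : ℝ → ℝ} (hx : Cadlag x) : ∃ M, ∀ t ∈ Set.Icc (0:ℝ) 1, |x t| ≤ M := by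
  set A : Set ℝ := {t | t ∈ Set.Icc (0:ℝ) 1 ∧ ∃ M, ∀ s ∈ Set.Icc (0:ℝ) t, |x s| ≤ M} with hA
  have h0 : (0:ℝ) ∈ A := by
    refine ⟨⟨le_refl 0, zero_le_one⟩, |x 0|, fun s hs => ?_⟩
    have : s = 0 := le_antisymm hs.2 hs.1
    rw [this]
  have hAne : A.Nonempty := ⟨0, h0⟩
  have hAbdd : BddAbove A := ⟨1, fun t ht => ht.1.2⟩
  set τ := sSup A with hτdef
  have hτ0 : 0 ≤ τ := le_csSup hAbdd h0
  have hτ1 : τ ≤ 1 := csSup_le hAne (fun t ht => ht.1.2)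
  have hτA : ∃ M, ∀ s ∈ Set.Icc (0:ℝ) τ, |x s| ≤ M := by
    rcases eq_or_lt_of_le hτ0 with h | h
    · refine ⟨|x 0|, fun s hs => ?_⟩
      have : s = 0 := le_antisymm (h ▸ hs.2) hs.1
      rw [this]
    · obtain ⟨L, hL⟩ := hx.2 τ ⟨h, hτ1⟩
      rw [Metric.tendsto_nhdsWithin_nhds] at hL
      obtain ⟨δ, hδ, hLδ⟩ := hL 1 one_pos
      obtain ⟨t, htA, htlt⟩ := exists_lt_of_lt_csSup hAne (show τ - δ < τ by linarith)
      have htτ : t ≤ τ := le_csSup hAbdd htA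
      obtain ⟨⟨ht0, _⟩, M, hM⟩ := htA
      refine ⟨max M (max (|L| + 1) |x τ|), fun s hs => ?_⟩
      rcases le_or_gt s t with h1 | h1
      · exact le_trans (hM s ⟨hs.1, h1⟩) (le_max_left _ _)
      · rcases eq_or_lt_of_le hs.2 with h2 | h2
        · rw [h2]; exact le_trans (le_max_right _ _) (le_max_right _ _)
        · have hd : dist s τ < δ := by
            rw [Real.dist_eq, abs_of_nonpos (by linarith)]
            linarith
          have := hLδ (Set.mem_Iio.2 h2) hd
          rw [Real.dist_eq] at this
          have : |x s| ≤ |L| + 1 := by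
            have h3 := abs_sub_abs_le_abs_sub (x s) L
            linarith
          exact le_trans this (le_trans (le_max_left _ _) (le_max_right _ _))
  obtain ⟨M, hM⟩ := hτA
  have hτeq : τ = 1 := by
    by_contra hne
    have hτlt : τ < 1 := lt_of_le_of_ne hτ1 hne
    have hc := hx.1 τ ⟨hτ0, hτlt⟩
    rw [ContinuousWithinAt, Metric.tendsto_nhdsWithin_nhds] at hc
    obtain ⟨δ, hδ, hcδ⟩ := hc 1 one_pos
    set t' := min (τ + δ/2) 1 with ht'def
    have ht'τ : τ < t' := lt_min (by linarith) hτlt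
    have ht'1 : t' ≤ 1 := min_le_right _ _
    have ht'A : t' ∈ A := by
      refine ⟨⟨by linarith, ht'1⟩, max M (|x τ| + 1), fun s hs => ?_⟩
      rcases le_or_gt s τ with h1 | h1
      · exact le_trans (hM s ⟨hs.1, h1⟩) (le_max_left _ _)
      · have hsIcc : s ∈ Set.Icc τ 1 := ⟨le_of_lt h1, le_trans hs.2 ht'1⟩
        have hd : dist s τ < δ := by
          rw [Real.dist_eq, abs_of_nonneg (by linarith)]
          have : s ≤ τ + δ/2 := le_trans hs.2 (min_le_left _ _)
          linarith
        have := hcδ hsIcc hd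
        rw [Real.dist_eq] at this
        have h3 := abs_sub_abs_le_abs_sub (x s) (x τ)
        have : |x s| ≤ |x τ| + 1 := by linarith
        exact le_trans this (le_max_right _ _)
    have := le_csSup hAbdd ht'A
    linarith [ht'τ]
  exact ⟨M, fun t ht => hM t ⟨ht.1, hτeq ▸ ht.2⟩⟩

lemma uc_of_continuousOn {f : ℝ → ℝ} (hf : ContinuousOn f (Set.Icc (0:ℝ) 1)) :
    ∀ ε > (0:ℝ), ∃ δ > (0:ℝ), ∀ a ∈ Set.Icc (0:ℝ) 1, ∀ b ∈ Set.Icc (0:ℝ) 1,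
      |a - b| < δ → |f a - f b| < ε := by
  have h := isCompact_Icc.uniformContinuousOn_of_continuous hf
  rw [Metric.uniformContinuousOn_iff] at h
  intro ε hε
  obtain ⟨δ, hδ, h⟩ := h ε hε
  refine ⟨δ, hδ, fun a ha b hb hab => ?_⟩
  have := h a ha b hb (by rwa [Real.dist_eq])
  rwa [Real.dist_eq] at this

lemma skor_to_unif (y : ℕ → ℝ → ℝ) (y₀ : ℝ → ℝ)
    (hy₀ : ContinuousOn y₀ (Set.Icc (0:ℝ) 1))
    (hne : ∀ n, (skorSet (y n) y₀).Nonempty)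
    (hconv : Tendsto (fun n => skorokhodDist (y n) y₀) atTop (𝓝 0)) :
    ∀ ε > (0:ℝ), ∀ᶠ n in atTop, ∀ s ∈ Set.Icc (0:ℝ) 1, |y n s - y₀ s| ≤ ε := by
  intro ε hε
  obtain ⟨δ, hδ, huc⟩ := uc_of_continuousOn hy₀ (ε/2) (by linarith)
  set δ' := min δ (ε/2) with hδ'def
  have hδ' : 0 < δ' := lt_min hδ (by linarith)
  have hev : ∀ᶠ n in atTop, skorokhodDist (y n) y₀ < δ' := hconv.eventually (gt_mem_nhds hδ')
  filter_upwards [hev] with n hn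
  rw [skorokhodDist_eq] at hn
  obtain ⟨d, hd, hdlt⟩ := exists_lt_of_csInf_lt (hne n) hn
  obtain ⟨hd0, l, hlmono, hlcont, hl0, hl1, hbd⟩ := hd
  intro s hs
  have hsimg : s ∈ l '' Set.Icc 0 1 := by
    apply intermediate_value_Icc zero_le_one hlcont
    rw [hl0, hl1]; exact hs
  obtain ⟨t, ht, rfl⟩ := hsimg
  obtain ⟨hb1, hb2⟩ := hbd t ht
  have h1 : |l t - t| < δ := lt_of_le_of_lt hb1 (lt_of_lt_of_le hdlt (min_le_left _ _))
  have h2 : |y₀ (l t) - y₀ t| < ε/2 := huc _ hs _ ht h1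
  have h3 : d ≤ ε/2 := le_of_lt (lt_of_lt_of_le hdlt (min_le_right _ _))
  calc |y n (l t) - y₀ (l t)| ≤ |y n (l t) - y₀ t| + |y₀ t - y₀ (l t)| := abs_sub_le _ _ _
    _ ≤ d + ε/2 := add_le_add hb2 (le_of_lt (by rwa [abs_sub_comm] at h2))
    _ ≤ ε := by linarith

/-- continuity of composition: if `x_n → x` in `D[0,1]` (Skorokhod) with `x`
continuous, and the time changes `φ_n → φ` in `D₀` (non-decreasing càdlàg maps of `[0,1]`
into `[0,1]`) with `φ` continuous, then `x_n ∘ φ_n → x ∘ φ` in `D[0,1]`. -/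
theorem stmt19 (x : ℕ → ℝ → ℝ) (x₀ : ℝ → ℝ) (φ : ℕ → ℝ → ℝ) (φ₀ : ℝ → ℝ)
    (hx : ∀ n, Cadlag (x n)) (hx₀ : ContinuousOn x₀ (Set.Icc (0:ℝ) 1))
    (hφcadlag : ∀ n, Cadlag (φ n))
    (hφmono : ∀ n, MonotoneOn (φ n) (Set.Icc (0:ℝ) 1))
    (hφmaps : ∀ n, Set.MapsTo (φ n) (Set.Icc (0:ℝ) 1) (Set.Icc (0:ℝ) 1))
    (hφ₀cont : ContinuousOn φ₀ (Set.Icc (0:ℝ) 1))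
    (hφ₀mono : MonotoneOn φ₀ (Set.Icc (0:ℝ) 1))
    (hφ₀maps : Set.MapsTo φ₀ (Set.Icc (0:ℝ) 1) (Set.Icc (0:ℝ) 1))
    (hxconv : Tendsto (fun n => skorokhodDist (x n) x₀) atTop (𝓝 0))
    (hφconv : Tendsto (fun n => skorokhodDist (φ n) φ₀) atTop (𝓝 0)) :
    Tendsto (fun n => skorokhodDist (x n ∘ φ n) (x₀ ∘ φ₀)) atTop (𝓝 0) := by
  -- bounds for the limits
  obtain ⟨Cx, hCx⟩ := isCompact_Icc.exists_bound_of_continuousOn hx₀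
  obtain ⟨Cφ, hCφ⟩ := isCompact_Icc.exists_bound_of_continuousOn hφ₀cont
  simp only [Real.norm_eq_abs] at hCx hCφ
  -- nonemptiness of Skorokhod sets
  have hxne : ∀ n, (skorSet (x n) x₀).Nonempty := fun n => by
    obtain ⟨M, hM⟩ := cadlag_bdd (hx n)
    exact skorSet_nonempty hM hCx
  have hφne : ∀ n, (skorSet (φ n) φ₀).Nonempty := fun n => by
    obtain ⟨M, hM⟩ := cadlag_bdd (hφcadlag n)
    exact skorSet_nonempty hM hCφ
  -- key eventual bound
  have key : ∀ ε > (0:ℝ), ∀ᶠ n in atTop, skorokhodDist (x n ∘ φ n) (x₀ ∘ φ₀) ≤ ε/2 := by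
    intro ε hε
    obtain ⟨δ, hδ, hucx⟩ := uc_of_continuousOn hx₀ (ε/4) (by linarith)
    have h1 := skor_to_unif x x₀ hx₀ hxne hxconv (ε/4) (by linarith)
    have h2 := skor_to_unif φ φ₀ hφ₀cont hφne hφconv (δ/2) (by linarith)
    filter_upwards [h1, h2] with n hn1 hn2
    have hbd : ∀ t ∈ Set.Icc (0:ℝ) 1, |(x n) (φ n t) - x₀ (φ₀ t)| ≤ ε/2 := by
      intro t ht
      have hφt := hφmaps n ht
      have hφ₀t := hφ₀maps ht
      have e1 : |x n (φ n t) - x₀ (φ n t)| ≤ ε/4 := hn1 _ hφt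
      have e2 : |x₀ (φ n t) - x₀ (φ₀ t)| < ε/4 := by
        apply hucx _ hφt _ hφ₀t
        have := hn2 t ht
        linarith
      calc |(x n) (φ n t) - x₀ (φ₀ t)|
          ≤ |x n (φ n t) - x₀ (φ n t)| + |x₀ (φ n t) - x₀ (φ₀ t)| := abs_sub_le _ _ _
        _ ≤ ε/4 + ε/4 := add_le_add e1 (le_of_lt e2)
        _ = ε/2 := by ring
    have hmem : ε/2 ∈ skorSet (x n ∘ φ n) (x₀ ∘ φ₀) := by
      refine ⟨by linarith, id, strictMono_id.strictMonoOn _, continuousOn_id, rfl, rfl, ?_⟩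
      intro t ht
      refine ⟨by simp; linarith, ?_⟩
      exact hbd t ht
    rw [skorokhodDist_eq]
    exact csInf_le (skorSet_bddBelow _ _) hmem
  rw [Metric.tendsto_atTop]
  intro ε hε
  obtain ⟨N, hN⟩ := (eventually_atTop.1 (key ε hε))
  refine ⟨N, fun n hn => ?_⟩
  rw [Real.dist_eq, sub_zero, abs_of_nonneg (skorokhodDist_nonneg _ _)]
  linarith [hN n hn]
end
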